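/- Let M be a symmetric real n×n matrix with eigenvalue decomposition M = Q D Qᵀ, Q orthogonal and D diagonal. Let D₊ be obtained from D by replacing each negative diagonal entry with zero. Then Q D₊ Qᵀ is positive semi-definite, symmetric, and among all positive semi-definite matrices it minimizes the Frobenius distance to M. -/

import Mathlib

open Matrix

/-- Squared Frobenius norm. -/
def frobSq {ι κ : Type*} [Fintype ι] [Fintype κ] (M : Matrix ι κ ℝ) : ℝ :=
  ∑ i, ∑ j, (M i j) ^ 2

lemma frobSq_eq_trace {n : ℕ} (A : Matrix (Fin n) (Fin n) ℝ) :
    frobSq A = (Aᵀ * A).trace := by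
  simp [frobSq, trace, Matrix.mul_apply, diag, sq]
  rw [Finset.sum_comm]

lemma frobSq_conj {n : ℕ} (Q A : Matrix (Fin n) (Fin n) ℝ)
    (hQ : Q * Qᵀ = 1) (hQ' : Qᵀ * Q = 1) :
    frobSq (Qᵀ * A * Q) = frobSq A := by
  rw [frobSq_eq_trace, frobSq_eq_trace]
  have : (Qᵀ * A * Q)ᵀ * (Qᵀ * A * Q) = Qᵀ * (Aᵀ * A) * Q := by
    simp only [Matrix.transpose_mul, Matrix.transpose_transpose, Matrix.mul_assoc]
    rw [← Matrix.mul_assoc Q Qᵀ, hQ, Matrix.one_mul]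
  rw [this, Matrix.trace_mul_cycle, ← Matrix.mul_assoc, hQ, Matrix.one_mul]

/-- given a symmetric matrix `M = Q D Qᵀ` with `Q` orthogonal and
`D` diagonal, replacing the negative diagonal entries of `D` by zero yields
`Q Dp Qᵀ`, which is symmetric positive semi-definite and is the closest
positive semi-definite matrix to `M` in the Frobenius distance. -/
theorem psd_projection_eigen {n : ℕ}
    (M Q : Matrix (Fin n) (Fin n) ℝ) (d : Fin n → ℝ)
    (hQ : Q * Qᵀ = 1) (hQ' : Qᵀ * Q = 1)
    (hM : M = Q * Matrix.diagonal d * Qᵀ) :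
    (Q * Matrix.diagonal (fun i => max (d i) 0) * Qᵀ).PosSemidef
    ∧ (Q * Matrix.diagonal (fun i => max (d i) 0) * Qᵀ)ᵀ
        = Q * Matrix.diagonal (fun i => max (d i) 0) * Qᵀ
    ∧ ∀ P : Matrix (Fin n) (Fin n) ℝ, P.PosSemidef →
        frobSq (M - Q * Matrix.diagonal (fun i => max (d i) 0) * Qᵀ)
          ≤ frobSq (M - P) := by
  have hdiagpsd : (Matrix.diagonal (fun i => max (d i) 0)).PosSemidef :=
    Matrix.posSemidef_diagonal_iff.mpr fun i => le_max_right _ _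
  have hconj : ∀ X : Matrix (Fin n) (Fin n) ℝ, Qᵀ * (Q * X * Qᵀ) * Q = X := by
    intro X
    calc Qᵀ * (Q * X * Qᵀ) * Q = (Qᵀ * Q) * X * (Qᵀ * Q) := by
          simp only [Matrix.mul_assoc]
      _ = X := by rw [hQ']; simp
  refine ⟨?_, ?_, ?_⟩
  · have := hdiagpsd.mul_mul_conjTranspose_same Q
    simpa [Matrix.conjTranspose_eq_transpose_of_trivial, Matrix.mul_assoc] using this
  · simp [Matrix.transpose_mul, Matrix.diagonal_transpose, Matrix.mul_assoc]
  · intro P hP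
    set Dp : Matrix (Fin n) (Fin n) ℝ := Matrix.diagonal (fun i => max (d i) 0) with hDp
    set B : Matrix (Fin n) (Fin n) ℝ := Qᵀ * P * Q with hBdef
    have hBpsd : B.PosSemidef := by
      have := hP.mul_mul_conjTranspose_same Qᵀ
      simpa [hBdef, Matrix.conjTranspose_eq_transpose_of_trivial, Matrix.mul_assoc] using this
    have hBdiag : ∀ i, 0 ≤ B i i := by
      intro i
      have := hBpsd.dotProduct_mulVec_nonneg (Pi.single i 1)
      simpa [mulVec, dotProduct, Pi.single_apply] using this
    have hPback : P = Q * B * Qᵀ := by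
      calc P = (Q * Qᵀ) * P * (Q * Qᵀ) := by rw [hQ]; simp
        _ = Q * B * Qᵀ := by simp only [hBdef, Matrix.mul_assoc]
    -- rewrite both sides using conjugation invariance
    have hconj' : ∀ A : Matrix (Fin n) (Fin n) ℝ, frobSq (Q * A * Qᵀ) = frobSq A := by
      intro A
      have := frobSq_conj Qᵀ A (by simpa using hQ') (by simpa using hQ)
      simpa using this
    have h1 : frobSq (M - Q * Dp * Qᵀ) = frobSq (Matrix.diagonal d - Dp) := by
      rw [hM, ← Matrix.sub_mul, ← Matrix.mul_sub]
      exact hconj' _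
    have h2 : frobSq (M - P) = frobSq (Matrix.diagonal d - B) := by
      rw [hM, hPback, ← Matrix.sub_mul, ← Matrix.mul_sub]
      exact hconj' _
    rw [h1, h2]
    have hLHS : frobSq (Matrix.diagonal d - Dp) = ∑ i, (d i - max (d i) 0) ^ 2 := by
      rw [hDp, Matrix.diagonal_sub]
      simp [frobSq, Matrix.diagonal_apply, apply_ite (fun x : ℝ => x ^ 2)]
    rw [hLHS]
    have step1 : ∀ i, (d i - max (d i) 0) ^ 2 ≤ (d i - B i i) ^ 2 := by
      intro i
      rcases le_or_gt 0 (d i) with h | h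
      · rw [max_eq_left h]; simpa using sq_nonneg (d i - B i i)
      · rw [max_eq_right h.le]
        nlinarith [hBdiag i, h.le]
    calc ∑ i, (d i - max (d i) 0) ^ 2 ≤ ∑ i, (d i - B i i) ^ 2 :=
          Finset.sum_le_sum fun i _ => step1 i
      _ ≤ ∑ i, ∑ j, ((Matrix.diagonal d - B) i j) ^ 2 := by
          refine Finset.sum_le_sum fun i _ => ?_
          have : (d i - B i i) ^ 2 = ((Matrix.diagonal d - B) i i) ^ 2 := by
            simp [Matrix.diagonal_apply]
          rw [this]
          exact Finset.single_le_sum (f := fun j => ((Matrix.diagonal d - B) i j) ^ 2)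
            (fun j _ => sq_nonneg _) (Finset.mem_univ i)
      _ = frobSq (Matrix.diagonal d - B) := rfl
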